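/- Let ρ_i > 0 be a positive sequence and define the standard proximal point iterates x_{k+1} = argmin_x { f(x) + (1/(2ρ_k))‖x − x_k‖² } for a proper closed convex f with nonempty minimizer set Ω. Then f(x_k) − f* ≤ dist(x₀, Ω)²/(2 ∑_{i=0}^{k-1} ρ_i). -/

import Mathlib

lemma prox_key {H : Type*} [NormedAddCommGroup H] [InnerProductSpace ℝ H]
    (f : H → ℝ) (hconv : ConvexOn ℝ Set.univ f)
    {ρ : ℝ} (hρ : 0 < ρ) (xk xp : H)
    (hmin : IsMinOn (fun y => f y + (1 / (2 * ρ)) * ‖y - xk‖^2) Set.univ xp) (y : H) :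
    ρ * (f xp - f y) ≤ inner ℝ (xk - xp) (xp - y) := by
  apply le_of_forall_pos_le_add
  intro ε hε
  set c : ℝ := ‖y - xp‖^2 with hc
  have hc0 : 0 ≤ c := sq_nonneg _
  set t : ℝ := min 1 (2 * ε / (c + 1)) with ht
  have ht0 : 0 < t := lt_min one_pos (by positivity)
  have ht1 : t ≤ 1 := min_le_left _ _
  have htc : (t / 2) * c ≤ ε := by
    have h1 : t ≤ 2 * ε / (c + 1) := min_le_right _ _
    have h2 : t * (c + 1) ≤ 2 * ε := (le_div_iff₀ (by positivity)).mp h1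
    nlinarith
  set z : H := xp + t • (y - xp) with hzdef
  have hz : f xp + (1 / (2 * ρ)) * ‖xp - xk‖^2 ≤ f z + (1 / (2 * ρ)) * ‖z - xk‖^2 :=
    hmin (Set.mem_univ z)
  have hzeq : z = (1 - t) • xp + t • y := by
    rw [hzdef]; module
  have hfconv : f z ≤ (1 - t) * f xp + t * f y := by
    rw [hzeq]
    exact hconv.2 (Set.mem_univ xp) (Set.mem_univ y) (by linarith) ht0.le (by ring)
  have hnorm : ‖z - xk‖^2 = ‖xp - xk‖^2 + 2 * t * inner ℝ (xp - xk) (y - xp) + t^2 * c := by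
    have h1 : z - xk = (xp - xk) + t • (y - xp) := by rw [hzdef]; abel
    rw [h1, @norm_add_sq_real, real_inner_smul_right, norm_smul]
    simp [abs_of_pos ht0, mul_pow, hc]
    ring
  have hinner : (inner ℝ (xp - xk) (y - xp) : ℝ) = inner ℝ (xk - xp) (xp - y) := by
    rw [show xk - xp = -(xp - xk) by abel, show xp - y = -(y - xp) by abel, inner_neg_neg]
  set I : ℝ := inner ℝ (xk - xp) (xp - y) with hI
  have hkey : t * (ρ * (f xp - f y)) ≤ t * (I + (t / 2) * c) := by
    rw [hnorm, hinner] at hz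
    have hρ' : (0:ℝ) < 2 * ρ := by linarith
    have expand : f xp + (1/(2*ρ)) * ‖xp - xk‖^2 ≤
        (1 - t) * f xp + t * f y + (1/(2*ρ)) * (‖xp - xk‖^2 + 2 * t * I + t^2 * c) := by
      linarith
    have : t * (f xp - f y) ≤ (1/(2*ρ)) * (2 * t * I + t^2 * c) := by nlinarith
    have h4 := mul_le_mul_of_nonneg_left this hρ.le
    have heq : ρ * (1 / (2 * ρ) * (2 * t * I + t ^ 2 * c)) = t * I + t ^ 2 * c / 2 := by
      field_simp
    rw [heq] at h4
    nlinarith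
  have := le_of_mul_le_mul_left (by linarith [hkey] : t * (ρ * (f xp - f y)) ≤ t * (I + (t/2)*c)) ht0
  linarith

theorem sppa_stmt19
    {H : Type*} [NormedAddCommGroup H] [InnerProductSpace ℝ H] [CompleteSpace H]
    (f : H → ℝ)
    (hconv : ConvexOn ℝ Set.univ f) (hlsc : LowerSemicontinuous f)
    (Ω : Set H) (hΩ : Ω = {y : H | ∀ w, f y ≤ f w}) (hΩne : Ω.Nonempty)
    (xs : H) (hxs : xs ∈ Ω)
    (ρ : ℕ → ℝ) (hρ : ∀ k, 0 < ρ k)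
    (x : ℕ → H)
    (hxmin : ∀ k : ℕ, IsMinOn
      (fun y => f y + (1 / (2 * ρ k)) * ‖y - x k‖^2) Set.univ (x (k+1))) :
    ∀ k ≥ 1, f (x k) - f xs ≤
      (Metric.infDist (x 0) Ω)^2 / (2 * ∑ i ∈ Finset.range k, ρ i) := by
  intro k hk
  have hfs_le : ∀ z, f xs ≤ f z := by rw [hΩ] at hxs; exact hxs
  have hfw : ∀ w ∈ Ω, f w = f xs := by
    intro w hw
    rw [hΩ] at hw
    exact le_antisymm (hw xs) (hfs_le w)
  have key : ∀ i (y : H), ρ i * (f (x (i+1)) - f y) ≤ inner ℝ (x i - x (i+1)) (x (i+1) - y) :=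
    fun i y => prox_key f hconv (hρ i) _ _ (hxmin i) y
  have mono : ∀ i, f (x (i+1)) ≤ f (x i) := by
    intro i
    have h := key i (x i)
    have h2 : (inner ℝ (x i - x (i+1)) (x (i+1) - x i) : ℝ) = -‖x (i+1) - x i‖^2 := by
      rw [show x i - x (i+1) = -(x (i+1) - x i) by abel, inner_neg_left,
        real_inner_self_eq_norm_sq]
    rw [h2] at h
    nlinarith [sq_nonneg ‖x (i+1) - x i‖, hρ i]
  have anti : Antitone (fun n => f (x n)) := antitone_nat_of_succ_le mono
  have tel : ∀ (w : H) (n : ℕ), ∑ i ∈ Finset.range n, ρ i * (f (x (i+1)) - f w) ≤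
      (‖x 0 - w‖^2 - ‖x n - w‖^2) / 2 := by
    intro w n
    induction n with
    | zero => simp
    | succ n ih =>
      rw [Finset.sum_range_succ]
      have h := key n w
      have h2 : 2 * (inner ℝ (x n - x (n+1)) (x (n+1) - w) : ℝ) =
          ‖x n - w‖^2 - ‖x n - x (n+1)‖^2 - ‖x (n+1) - w‖^2 := by
        have : x n - w = (x n - x (n+1)) + (x (n+1) - w) := by abel
        rw [this, @norm_add_sq_real]; ring
      nlinarith [sq_nonneg ‖x n - x (n+1)‖]
  set S : ℝ := ∑ i ∈ Finset.range k, ρ i with hS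
  have hSpos : 0 < S := Finset.sum_pos (fun i _ => hρ i) (by simp; omega)
  have hW : ∀ w ∈ Ω, 2 * S * (f (x k) - f xs) ≤ dist (x 0) w ^ 2 := by
    intro w hw
    have h1 : S * (f (x k) - f xs) ≤ ∑ i ∈ Finset.range k, ρ i * (f (x (i+1)) - f xs) := by
      rw [hS, Finset.sum_mul]
      apply Finset.sum_le_sum
      intro i hi
      have : f (x k) ≤ f (x (i+1)) := anti (Nat.succ_le_of_lt (Finset.mem_range.1 hi))
      nlinarith [hρ i]
    have h2 : ∑ i ∈ Finset.range k, ρ i * (f (x (i+1)) - f xs) ≤ ‖x 0 - w‖^2 / 2 := by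
      have h := tel w k
      rw [hfw w hw] at h
      nlinarith [sq_nonneg ‖x k - w‖]
    rw [dist_eq_norm]
    nlinarith
  set d : ℝ := Metric.infDist (x 0) Ω with hd
  set L : ℝ := 2 * S * (f (x k) - f xs) with hL
  have hL0 : 0 ≤ L := by
    have := hfs_le (x k); nlinarith
  have hsqrt : Real.sqrt L ≤ d := by
    by_contra hcon
    push_neg at hcon
    obtain ⟨w, hw, hlt⟩ := (Metric.infDist_lt_iff hΩne).1 hcon
    have : Real.sqrt L ≤ dist (x 0) w :=
      calc Real.sqrt L ≤ Real.sqrt (dist (x 0) w ^ 2) := Real.sqrt_le_sqrt (hW w hw)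
        _ = dist (x 0) w := Real.sqrt_sq dist_nonneg
    linarith
  have hLd : L ≤ d ^ 2 := by
    calc L = Real.sqrt L ^ 2 := (Real.sq_sqrt hL0).symm
      _ ≤ d ^ 2 := pow_le_pow_left₀ (Real.sqrt_nonneg _) hsqrt 2
  rw [le_div_iff₀ (by positivity)]
  linarith
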